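/- Let $n \geq 1$ and $m \geq 0$ be integers and define the kernel $$k(t) = (-1)^n\sum_{j=0}^m \frac{P_{n+2j}(t)\,P_{n+2j}^{(n)}(0)}{h_{n+2j}},$$ where $P_N^{(n)}$ denotes the $n$-th derivative of $P_N$ and $h_N = 2/(2N+1)$. Then the moments of $k$ satisfy $$\int_{-1}^1 t^{\ell}\,k(t)\,dt = \begin{cases} (-1)^n\, n! & \text{if } \ell = n,\\ 0 & \text{if } \ell \in \{0,1,\dots,n+2m+1\},\ \ell \neq n.\end{cases}$$ -/

import Mathlib

open Real Filter Finset intervalIntegral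

/-- Legendre polynomial of degree `n` (Rodrigues formula), the orthogonal polynomial
on `[-1,1]` with weight `1` normalized by `P n 1 = 1`. -/
noncomputable def legendreP (n : ℕ) : ℝ → ℝ :=
  fun x => (1 / ((2:ℝ) ^ n * (Nat.factorial n : ℝ))) *
    iteratedDeriv n (fun y : ℝ => (y ^ 2 - 1) ^ n) x

/-- The kernel `k(t) = (-1)^n ∑_{j=0}^m P_{n+2j}(t) P_{n+2j}^{(n)}(0) / h_{n+2j}`
with `h_N = 2/(2N+1)`. -/
noncomputable def kker (n m : ℕ) (t : ℝ) : ℝ :=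
  (-1:ℝ)^n * ∑ j ∈ Finset.range (m+1),
    legendreP (n + 2*j) t * iteratedDeriv n (legendreP (n + 2*j)) 0 /
      (2 / (2*((n:ℝ) + 2*(j:ℝ)) + 1))

open Polynomial
noncomputable def q (N : ℕ) : Polynomial ℝ := ((X:Polynomial ℝ)^2 - 1)^N

lemma q_monic (N : ℕ) : (q N).Monic := by
  have h : ((X:Polynomial ℝ)^2 - 1) = X^2 - C 1 := by simp
  exact ((h ▸ monic_X_pow_sub_C (1:ℝ) (by norm_num)).pow N)

lemma q_natDegree (N : ℕ) : (q N).natDegree = 2*N := by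
  have h : ((X:Polynomial ℝ)^2 - 1) = X^2 - C 1 := by simp
  rw [q, h, natDegree_pow, natDegree_X_pow_sub_C]; ring

lemma q_root_iterate {N k : ℕ} (hk : k < N) (x : ℝ) (hx : x = 1 ∨ x = -1) :
    (derivative^[k] (q N)).eval x = 0 := by
  have hdvd : (X - C x)^(N - k) ∣ derivative^[k] (q N) := by
    refine Polynomial.pow_sub_dvd_iterate_derivative_of_pow_dvd k ?_
    have hq : q N = (X - C x)^N * ((X + C x)^N) := by
      rw [q, ← mul_pow]
      rcases hx with h | h <;> subst h <;> ring_nf <;> simp <;> ring_nf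
    exact hq ▸ dvd_mul_right _ _
  obtain ⟨c, hc⟩ := hdvd
  have hNk : N - k ≠ 0 := by omega
  rw [hc]
  simp [sub_eq_zero, zero_pow hNk]

-- integrability
lemma pintble (p : Polynomial ℝ) (a b : ℝ) :
    IntervalIntegrable (fun x => p.eval x) MeasureTheory.volume a b :=
  p.continuous.intervalIntegrable a b

lemma integral_derivative (p : Polynomial ℝ) (a b : ℝ) :
    (∫ x in a..b, (derivative p).eval x) = p.eval b - p.eval a := by
  apply integral_eq_sub_of_hasDerivAt (fun x _ => p.hasDerivAt x)
  exact pintble _ a b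

lemma iteratedDeriv_eval (p : Polynomial ℝ) (n : ℕ) :
    iteratedDeriv n (fun x => p.eval x) = fun x => (derivative^[n] p).eval x := by
  induction n generalizing p with
  | zero => simp
  | succ k ih =>
    rw [iteratedDeriv_succ', Function.iterate_succ_apply]
    rw [← ih (derivative p)]
    ext x
    congr 1
    funext y
    exact Polynomial.deriv p

lemma ibp (p r : Polynomial ℝ) :
    (∫ x in (-1:ℝ)..1, (p * derivative r).eval x) =
      (p*r).eval 1 - (p*r).eval (-1) - ∫ x in (-1:ℝ)..1, ((derivative p) * r).eval x := by
  have h := integral_derivative (p * r) (-1) 1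
  rw [derivative_mul] at h
  have : (∫ x in (-1:ℝ)..1, (derivative p * r + p * derivative r).eval x)
      = (∫ x in (-1:ℝ)..1, (derivative p * r).eval x) + ∫ x in (-1:ℝ)..1, (p * derivative r).eval x := by
    simp only [eval_add]
    exact integral_add (pintble _ _ _) (pintble _ _ _)
  rw [this] at h
  linarith

lemma ibp_iter (N : ℕ) (p : Polynomial ℝ) : ∀ j, j ≤ N →
    (∫ x in (-1:ℝ)..1, (p * derivative^[N] (q N)).eval x) =
      (-1:ℝ)^j * ∫ x in (-1:ℝ)..1, ((derivative^[j] p) * derivative^[N-j] (q N)).eval x := by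
  intro j
  induction j with
  | zero => simp
  | succ j ih =>
    intro hj
    rw [ih (by omega)]
    have hsub : N - j = (N - (j+1)) + 1 := by omega
    have hr : derivative^[N-j] (q N) = derivative (derivative^[N-(j+1)] (q N)) := by
      rw [hsub, Function.iterate_succ_apply']
    rw [hr, ibp]
    have h1 : (derivative^[N-(j+1)] (q N)).eval 1 = 0 := q_root_iterate (by omega) 1 (Or.inl rfl)
    have h2 : (derivative^[N-(j+1)] (q N)).eval (-1) = 0 := q_root_iterate (by omega) (-1) (Or.inr rfl)
    rw [eval_mul, eval_mul, h1, h2, Function.iterate_succ_apply']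
    ring

noncomputable def Lg (N : ℕ) : Polynomial ℝ :=
  C (1 / ((2:ℝ) ^ N * (Nat.factorial N : ℝ))) * derivative^[N] (q N)

lemma natDegree_Lg_le (N : ℕ) : (Lg N).natDegree ≤ N := by
  refine (natDegree_C_mul_le _ _).trans ?_
  have := natDegree_iterate_derivative (q N) N
  rw [q_natDegree] at this
  omega

lemma coeff_Lg (N : ℕ) :
    (Lg N).coeff N = (1 / ((2:ℝ) ^ N * (Nat.factorial N : ℝ))) * ((2*N).descFactorial N : ℝ) := by
  rw [Lg, coeff_C_mul, coeff_iterate_derivative]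
  have h2 : N + N = 2*N := by ring
  rw [h2]
  have : (q N).coeff (2*N) = 1 := by
    have := (q_monic N).coeff_natDegree
    rwa [q_natDegree] at this
  rw [this]
  simp

lemma coeff_Lg_ne (N : ℕ) : (Lg N).coeff N ≠ 0 := by
  rw [coeff_Lg]
  have h1 : ((2:ℝ)^N * (Nat.factorial N : ℝ)) ≠ 0 := by positivity
  have h2 : ((2*N).descFactorial N : ℝ) ≠ 0 := by
    have : (2*N).descFactorial N ≠ 0 := by
      intro h
      exact absurd (Nat.descFactorial_eq_zero_iff_lt.mp h) (by omega)
    exact_mod_cast this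
  positivity

lemma int_mul_Lg (p : Polynomial ℝ) (N : ℕ) :
    (∫ x in (-1:ℝ)..1, (p * Lg N).eval x) =
      (1 / ((2:ℝ) ^ N * (Nat.factorial N : ℝ))) * ((-1:ℝ)^N *
        ∫ x in (-1:ℝ)..1, ((derivative^[N] p) * q N).eval x) := by
  have h : ∀ x : ℝ, (p * Lg N).eval x
      = (1 / ((2:ℝ) ^ N * (Nat.factorial N : ℝ))) * (p * derivative^[N] (q N)).eval x := by
    intro x; rw [Lg]; simp [eval_mul]; ring
  simp only [h]
  rw [integral_const_mul, ibp_iter N p N le_rfl]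
  simp

lemma ortho_lt {M N : ℕ} (h : M < N) : (∫ x in (-1:ℝ)..1, (Lg M * Lg N).eval x) = 0 := by
  rw [int_mul_Lg]
  have : derivative^[N] (Lg M) = 0 :=
    iterate_derivative_eq_zero (lt_of_le_of_lt (natDegree_Lg_le M) h)
  rw [this]
  simp

lemma ortho {M N : ℕ} (h : M ≠ N) : (∫ x in (-1:ℝ)..1, (Lg M * Lg N).eval x) = 0 := by
  rcases Nat.lt_or_ge M N with h' | h'
  · exact ortho_lt h'
  · have := ortho_lt (show N < M by omega)
    rw [mul_comm] at this
    exact this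

lemma q_eval_pm1 {N : ℕ} (hN : N ≠ 0) (x : ℝ) (hx : x = 1 ∨ x = -1) : (q N).eval x = 0 := by
  have : (q N).eval x = (x^2-1)^N := by simp [q]
  rw [this]
  rcases hx with h | h <;> subst h <;> simp [zero_pow hN] <;> norm_num [zero_pow hN]

lemma intq_rec (k : ℕ) :
    (2*(k:ℝ)+3) * (∫ x in (-1:ℝ)..1, (q (k+1)).eval x)
      = -(2*(k:ℝ)+2) * ∫ x in (-1:ℝ)..1, (q k).eval x := by
  have hpoly : derivative (X * q (k+1)) =
      (2*((k:ℕ):Polynomial ℝ)+3) * q (k+1) + (2*((k:ℕ):Polynomial ℝ)+2) * q k := by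
    rw [q, q, derivative_mul, derivative_X, derivative_pow]
    simp only [derivative_sub, derivative_one, derivative_X_pow, C_eq_natCast]
    push_cast
    have hq : ((X:Polynomial ℝ)^2 - 1)^(k+1) = ((X:Polynomial ℝ)^2-1)^k * (X^2-1) := by ring
    rw [hq]
    ring_nf
  have hI := integral_derivative (X * q (k+1)) (-1) 1
  rw [hpoly] at hI
  have he1 : (X * q (k+1)).eval 1 = 0 := by
    rw [eval_mul, q_eval_pm1 (by omega) 1 (Or.inl rfl), mul_zero]
  have he2 : (X * q (k+1)).eval (-1) = 0 := by
    rw [eval_mul, q_eval_pm1 (by omega) (-1) (Or.inr rfl), mul_zero]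
  rw [he1, he2, sub_zero] at hI
  have hsplit : (∫ x in (-1:ℝ)..1,
      ((2*((k:ℕ):Polynomial ℝ)+3) * q (k+1) + (2*((k:ℕ):Polynomial ℝ)+2) * q k).eval x)
      = (2*(k:ℝ)+3) * (∫ x in (-1:ℝ)..1, (q (k+1)).eval x)
        + (2*(k:ℝ)+2) * ∫ x in (-1:ℝ)..1, (q k).eval x := by
    have hptA : ∀ x : ℝ, ((2*((k:ℕ):Polynomial ℝ)+3) * q (k+1)).eval x
        = (2*(k:ℝ)+3) * (q (k+1)).eval x := by intro x; simp
    have hptB : ∀ x : ℝ, ((2*((k:ℕ):Polynomial ℝ)+2) * q k).eval x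
        = (2*(k:ℝ)+2) * (q k).eval x := by intro x; simp
    simp only [eval_add]
    rw [integral_add (pintble _ _ _) (pintble _ _ _)]
    simp only [hptA, hptB]
    rw [integral_const_mul, integral_const_mul]
  rw [hsplit] at hI
  linarith

lemma intq (N : ℕ) : (∫ x in (-1:ℝ)..1, (q N).eval x)
    = (-1:ℝ)^N * 2^(2*N+1) * ((Nat.factorial N : ℝ))^2 / ((Nat.factorial (2*N+1) : ℝ)) := by
  induction N with
  | zero => simp [q]; norm_num
  | succ k ih =>
    have hrec := intq_rec k
    rw [ih] at hrec
    have h3 : (2*(k:ℝ)+3) ≠ 0 := by positivity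
    have hf1 : (Nat.factorial (2*(k+1)+1) : ℝ)
        = (2*(k:ℝ)+3) * (2*(k:ℝ)+2) * (Nat.factorial (2*k+1) : ℝ) := by
      have : 2*(k+1)+1 = (2*k+2)+1 := by ring
      rw [this]
      rw [Nat.factorial_succ, Nat.factorial_succ]
      push_cast
      ring
    have hf2 : (Nat.factorial (k+1) : ℝ) = ((k:ℝ)+1) * (Nat.factorial k : ℝ) := by
      rw [Nat.factorial_succ]; push_cast; ring
    have hfk : (Nat.factorial (2*k+1) : ℝ) ≠ 0 := by
      exact_mod_cast Nat.factorial_ne_zero _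
    have hgoal : (∫ x in (-1:ℝ)..1, (q (k+1)).eval x)
        = -(2*(k:ℝ)+2) * ((-1:ℝ)^k * 2^(2*k+1) * ((Nat.factorial k : ℝ))^2
            / ((Nat.factorial (2*k+1) : ℝ))) / (2*(k:ℝ)+3) := by
      field_simp at hrec ⊢
      linarith
    rw [hgoal, hf1, hf2]
    have hfk1 : (2*(k:ℝ)+3) * (2*(k:ℝ)+2) * (Nat.factorial (2*k+1) : ℝ) ≠ 0 := by positivity
    field_simp
    ring

lemma iterate_derivative_q_top (N : ℕ) :
    derivative^[2*N] (q N) = C ((Nat.factorial (2*N) : ℝ)) := by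
  have hdeg : (derivative^[2*N] (q N)).natDegree ≤ 0 := by
    have := natDegree_iterate_derivative (q N) (2*N)
    rw [q_natDegree] at this
    omega
  have := Polynomial.eq_C_of_natDegree_le_zero hdeg
  rw [this, coeff_iterate_derivative]
  have h0 : (q N).coeff (0 + 2*N) = 1 := by
    have := (q_monic N).coeff_natDegree
    rwa [q_natDegree, ← zero_add (2*N)] at this
  rw [h0]
  simp [Nat.descFactorial_self]

lemma iterate_derivative_Lg (N k : ℕ) :
    derivative^[k] (Lg N) = C (1 / ((2:ℝ) ^ N * (Nat.factorial N : ℝ))) *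
      derivative^[N + k] (q N) := by
  rw [Lg, Polynomial.iterate_derivative_C_mul, ← Function.iterate_add_apply]
  rw [Nat.add_comm k N]

lemma diag (N : ℕ) : (∫ x in (-1:ℝ)..1, (Lg N * Lg N).eval x) = 2 / (2*(N:ℝ)+1) := by
  rw [int_mul_Lg]
  have h1 : derivative^[N] (Lg N) = C ((1 / ((2:ℝ) ^ N * (Nat.factorial N : ℝ)))
      * (Nat.factorial (2*N) : ℝ)) := by
    rw [iterate_derivative_Lg]
    have : N + N = 2*N := by ring
    rw [this, iterate_derivative_q_top, ← C_mul]
  rw [h1]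
  have h2 : ∀ x : ℝ, (C ((1 / ((2:ℝ) ^ N * (Nat.factorial N : ℝ)))
      * (Nat.factorial (2*N) : ℝ)) * q N).eval x
      = ((1 / ((2:ℝ) ^ N * (Nat.factorial N : ℝ))) * (Nat.factorial (2*N) : ℝ)) * (q N).eval x := by
    intro x; simp
  simp only [h2]
  rw [integral_const_mul, intq]
  have hfN : (Nat.factorial N : ℝ) ≠ 0 := by exact_mod_cast Nat.factorial_ne_zero _
  have hf2N : (Nat.factorial (2*N) : ℝ) ≠ 0 := by exact_mod_cast Nat.factorial_ne_zero _
  have hf2N1 : (Nat.factorial (2*N+1) : ℝ) = (2*(N:ℝ)+1) * (Nat.factorial (2*N) : ℝ) := by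
    rw [Nat.factorial_succ]; push_cast; ring
  have h2N1 : (2*(N:ℝ)+1) ≠ 0 := by positivity
  rw [hf2N1]
  have h2p : ((2:ℝ)^N) ≠ 0 := by positivity
  have hpow : ((2:ℝ)^(2*N+1)) = 2 * ((2:ℝ)^N)^2 := by
    rw [two_mul, pow_succ, pow_add]; ring
  rw [hpow]
  field_simp
  ring_nf
  all_goals (try (simp only [pow_mul', neg_one_sq, one_pow]; try norm_num; try ring))

-- parity
lemma iterate_derivative_comp_neg_X (p : Polynomial ℝ) (k : ℕ) :
    derivative^[k] (p.comp (-X)) = (-1)^k * (derivative^[k] p).comp (-X) := by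
  induction k generalizing p with
  | zero => simp
  | succ k ih =>
    rw [Function.iterate_succ_apply, Function.iterate_succ_apply]
    have hd : derivative (p.comp (-X)) = -((derivative p).comp (-X)) := by
      rw [derivative_comp]
      simp
    rw [hd]
    rw [Polynomial.iterate_derivative_neg, ih (derivative p), pow_succ]
    ring

lemma q_comp_neg (N : ℕ) : (q N).comp (-X) = q N := by
  simp [q, sub_comp, pow_comp, X_comp, neg_pow, neg_sq]

lemma q_iterate_eval_zero {N j : ℕ} (hj : ¬ 2 ∣ j) :
    (derivative^[j] (q N)).eval 0 = 0 := by
  have h := iterate_derivative_comp_neg_X (q N) j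
  rw [q_comp_neg] at h
  have heval := congrArg (fun p => Polynomial.eval (0:ℝ) p) h
  simp only [eval_mul, eval_pow, eval_neg, eval_one, eval_comp, eval_X, neg_zero] at heval
  have hodd : Odd j := Nat.odd_iff.mpr (by omega)
  rw [hodd.neg_one_pow] at heval
  linarith

lemma Lg_deriv_eval_zero_of_odd {N k : ℕ} (h : ¬ 2 ∣ (N + k)) :
    (derivative^[k] (Lg N)).eval 0 = 0 := by
  rw [iterate_derivative_Lg, eval_mul, q_iterate_eval_zero h, mul_zero]

-- span
lemma span_Lg (D : ℕ) : ∀ p : Polynomial ℝ, p.natDegree ≤ D →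
    p ∈ Submodule.span ℝ (Lg '' Set.Iic D) := by
  induction D with
  | zero =>
    intro p hp
    have hpc : p = C (p.coeff 0) := Polynomial.eq_C_of_natDegree_le_zero hp
    obtain ⟨d, hd, hdne⟩ : ∃ d, Lg 0 = C d ∧ d ≠ 0 :=
      ⟨_, Polynomial.eq_C_of_natDegree_le_zero (natDegree_Lg_le 0), coeff_Lg_ne 0⟩
    have key : p = (p.coeff 0 / d) • Lg 0 := by
      rw [hd, smul_C, smul_eq_mul, div_mul_cancel₀ _ hdne, ← hpc]
    rw [key]
    exact Submodule.smul_mem _ _ (Submodule.subset_span ⟨0, Set.mem_Iic.mpr le_rfl, rfl⟩)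
  | succ D ih =>
    intro p hp
    set a : ℝ := p.coeff (D+1) / (Lg (D+1)).coeff (D+1) with ha
    have hr : (p - a • Lg (D+1)).natDegree ≤ D := by
      rw [Polynomial.natDegree_le_iff_coeff_eq_zero]
      intro M hM
      rw [Polynomial.coeff_sub, Polynomial.coeff_smul]
      rcases Nat.lt_or_ge (D+1) M with h' | h'
      · rw [Polynomial.coeff_eq_zero_of_natDegree_lt (lt_of_le_of_lt hp h'),
          Polynomial.coeff_eq_zero_of_natDegree_lt (lt_of_le_of_lt (natDegree_Lg_le _) h')]
        simp
      · have hMeq : M = D + 1 := by omega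
        subst hMeq
        rw [ha, smul_eq_mul, div_mul_cancel₀ _ (coeff_Lg_ne (D+1)), sub_self]
    have hmem : p - a • Lg (D+1) ∈ Submodule.span ℝ (Lg '' Set.Iic (D+1)) := by
      refine Submodule.span_mono ?_ (ih _ hr)
      exact Set.image_mono (Set.Iic_subset_Iic.mpr (by omega))
    have hLg : Lg (D+1) ∈ Submodule.span ℝ (Lg '' Set.Iic (D+1)) :=
      Submodule.subset_span ⟨D+1, Set.mem_Iic.mpr le_rfl, rfl⟩
    have : p = (p - a • Lg (D+1)) + a • Lg (D+1) := by ring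
    rw [this]
    exact Submodule.add_mem _ hmem (Submodule.smul_mem _ _ hLg)

lemma legendreP_eq (N : ℕ) : legendreP N = fun x => (Lg N).eval x := by
  funext x
  have hfun : (fun y : ℝ => (y ^ 2 - 1) ^ N) = fun y => (q N).eval y := by
    funext y; simp [q]
  rw [legendreP, hfun, iteratedDeriv_eval, Lg]
  simp

lemma legendreP_deriv_zero (N n : ℕ) :
    iteratedDeriv n (legendreP N) 0 = (derivative^[n] (Lg N)).eval 0 := by
  rw [legendreP_eq, iteratedDeriv_eval]

noncomputable def Kpoly (n m : ℕ) : Polynomial ℝ :=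
  ∑ j ∈ Finset.range (m+1),
    C ((derivative^[n] (Lg (n + 2*j))).eval 0 * ((2*((n:ℝ) + 2*(j:ℝ)) + 1)/2)) * Lg (n + 2*j)

lemma kker_eq (n m : ℕ) (t : ℝ) : kker n m t = (-1:ℝ)^n * (Kpoly n m).eval t := by
  rw [kker, Kpoly, eval_finset_sum]
  congr 1
  apply Finset.sum_congr rfl
  intro j _
  rw [legendreP_deriv_zero, legendreP_eq]
  rw [eval_mul, eval_C]
  have hd : (2*((n:ℝ) + 2*(j:ℝ)) + 1) ≠ 0 := by positivity
  field_simp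

lemma key_int (n m : ℕ) (N : ℕ) (hND : N ≤ n + 2*m + 1) :
    (∫ x in (-1:ℝ)..1, (Lg N * Kpoly n m).eval x) = (derivative^[n] (Lg N)).eval 0 := by
  have hsplit : (∫ x in (-1:ℝ)..1, (Lg N * Kpoly n m).eval x)
      = ∑ j ∈ Finset.range (m+1),
          ((derivative^[n] (Lg (n + 2*j))).eval 0 * ((2*((n:ℝ) + 2*(j:ℝ)) + 1)/2)) *
            ∫ x in (-1:ℝ)..1, (Lg N * Lg (n + 2*j)).eval x := by
    rw [Kpoly, Finset.mul_sum]
    have : ∀ x : ℝ, (∑ j ∈ Finset.range (m+1), Lg N *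
        (C ((derivative^[n] (Lg (n + 2*j))).eval 0 * ((2*((n:ℝ) + 2*(j:ℝ)) + 1)/2)) * Lg (n + 2*j))).eval x
        = ∑ j ∈ Finset.range (m+1),
          ((derivative^[n] (Lg (n + 2*j))).eval 0 * ((2*((n:ℝ) + 2*(j:ℝ)) + 1)/2)) *
            (Lg N * Lg (n + 2*j)).eval x := by
      intro x
      rw [eval_finset_sum]
      apply Finset.sum_congr rfl
      intro j _
      simp [eval_mul]; ring
    simp only [this]
    rw [integral_finset_sum]
    · apply Finset.sum_congr rfl
      intro j _
      exact integral_const_mul _ _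
    · intro j _
      exact ((continuous_const.mul ((Lg N * Lg (n+2*j)).continuous)).intervalIntegrable _ _)
  rw [hsplit]
  by_cases hex : ∃ j, j ≤ m ∧ N = n + 2*j
  · obtain ⟨j0, hj0m, hj0⟩ := hex
    rw [Finset.sum_eq_single_of_mem j0 (Finset.mem_range.mpr (by omega))]
    · subst hj0
      rw [_root_.diag]
      have hc : ((n:ℝ) + 2*(j0:ℝ)) = ((n + 2*j0 : ℕ) : ℝ) := by push_cast; ring
      rw [hc]
      have hd : (2*(((n + 2*j0 : ℕ)):ℝ) + 1) ≠ 0 := by positivity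
      field_simp
    · intro j _ hne
      rw [ortho (show N ≠ n + 2*j by omega), mul_zero]
  · push_neg at hex
    have hzero : ∀ j ∈ Finset.range (m+1),
        ((derivative^[n] (Lg (n + 2*j))).eval 0 * ((2*((n:ℝ) + 2*(j:ℝ)) + 1)/2)) *
          (∫ x in (-1:ℝ)..1, (Lg N * Lg (n + 2*j)).eval x) = 0 := by
      intro j hj
      rw [ortho (show N ≠ n + 2*j from hex j (by simp at hj; omega)), mul_zero]
    rw [Finset.sum_eq_zero hzero]
    rcases Nat.lt_or_ge N n with hlt | hge
    · have : derivative^[n] (Lg N) = 0 :=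
        iterate_derivative_eq_zero (lt_of_le_of_lt (natDegree_Lg_le N) hlt)
      rw [this]; simp
    · have hdvd : ¬ 2 ∣ (N + n) := by
        intro hd
        obtain ⟨j, hj⟩ : ∃ j, N = n + 2*j := by
          obtain ⟨c, hc⟩ := hd
          exact ⟨c - n, by omega⟩
        exact hex j (by omega) hj
      exact (Lg_deriv_eval_zero_of_odd hdvd).symm

lemma iterate_derivative_add' (n : ℕ) (x y : Polynomial ℝ) :
    derivative^[n] (x + y) = derivative^[n] x + derivative^[n] y := by
  induction n with
  | zero => simp
  | succ k ihk =>
    rw [Function.iterate_succ_apply', Function.iterate_succ_apply',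
      Function.iterate_succ_apply', ihk, derivative_add]

lemma main_poly (n m : ℕ) (p : Polynomial ℝ) (hp : p.natDegree ≤ n + 2*m + 1) :
    (∫ x in (-1:ℝ)..1, (p * Kpoly n m).eval x) = (derivative^[n] p).eval 0 := by
  have hmem := span_Lg (n + 2*m + 1) p hp
  clear hp
  induction hmem using Submodule.span_induction with
  | mem x hx =>
    obtain ⟨N, hN, rfl⟩ := hx
    exact key_int n m N (Set.mem_Iic.mp hN)
  | zero => simp
  | add x y hx hy ihx ihy =>
    have hsum : ∀ t : ℝ, ((x + y) * Kpoly n m).eval t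
        = (x * Kpoly n m).eval t + (y * Kpoly n m).eval t := by
      intro t; rw [add_mul, eval_add]
    simp only [hsum]
    rw [integral_add (pintble _ _ _) (pintble _ _ _), ihx, ihy]
    rw [iterate_derivative_add', eval_add]
  | smul a x hx ih =>
    have hs : ∀ t : ℝ, ((a • x) * Kpoly n m).eval t = a * (x * Kpoly n m).eval t := by
      intro t; rw [smul_mul_assoc, eval_smul, smul_eq_mul]
    simp only [hs]
    rw [integral_const_mul, ih, Polynomial.iterate_derivative_smul, eval_smul, smul_eq_mul]

theorem stmt2 (n m : ℕ) (hn : 1 ≤ n) (l : ℕ) (hl : l ≤ n + 2*m + 1) :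
    (∫ t in (-1:ℝ)..1, t ^ l * kker n m t) =
      if l = n then (-1:ℝ)^n * (Nat.factorial n : ℝ) else 0 := by
  have hint : (∫ t in (-1:ℝ)..1, t ^ l * kker n m t)
      = (-1:ℝ)^n * ∫ t in (-1:ℝ)..1, ((X^l : Polynomial ℝ) * Kpoly n m).eval t := by
    rw [← integral_const_mul]
    apply intervalIntegral.integral_congr
    intro t _
    simp only [kker_eq, eval_mul, eval_pow, eval_X]
    ring
  rw [hint, main_poly n m (X^l) (by simpa [Polynomial.natDegree_X_pow] using hl)]
  rw [Polynomial.iterate_derivative_X_pow_eq_C_mul]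
  rcases eq_or_ne l n with h | h
  · subst h
    simp [Nat.descFactorial_self]
  · rw [if_neg h]
    rcases Nat.lt_or_ge l n with hlt | hge
    · rw [Nat.descFactorial_eq_zero_iff_lt.mpr hlt]
      simp
    · have hln : l - n ≠ 0 := by omega
      rw [eval_mul, eval_pow, eval_X, zero_pow hln, mul_zero, mul_zero]
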